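/- Let G be a group and x, y, z ∈ G three involutions (elements of order 2). Then the generalized order of xyz satisfies e(xyz) ≤ 4; explicitly, with g = xyz one has g · g^z · g^x · g^{zx} = 1. -/
import Mathlib


/-- The generalized order of `g`: the smallest positive `k` such that some product of
`k` conjugates of `g` equals the identity. -/
noncomputable def genOrder {G : Type*} [Group G] (g : G) : ℕ :=
  sInf {k | 0 < k ∧ ∃ l : List G, l.length = k ∧ (l.map fun x => x⁻¹ * g * x).prod = 1}

theorem stmt2 {G : Type*} [Group G] (x y z : G)
    (hx : orderOf x = 2) (hy : orderOf y = 2) (hz : orderOf z = 2) :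
    (x * y * z) * (z⁻¹ * (x * y * z) * z) * (x⁻¹ * (x * y * z) * x) *
      ((z * x)⁻¹ * (x * y * z) * (z * x)) = 1 ∧
    genOrder (x * y * z) ≤ 4 := by
  have hx2 : x * x = 1 := by
    have := pow_orderOf_eq_one x; rw [hx, pow_two] at this; exact this
  have hy2 : y * y = 1 := by
    have := pow_orderOf_eq_one y; rw [hy, pow_two] at this; exact this
  have hz2 : z * z = 1 := by
    have := pow_orderOf_eq_one z; rw [hz, pow_two] at this; exact this
  have hxi : x⁻¹ = x := by rw [inv_eq_iff_mul_eq_one]; exact hx2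
  have hyi : y⁻¹ = y := by rw [inv_eq_iff_mul_eq_one]; exact hy2
  have hzi : z⁻¹ = z := by rw [inv_eq_iff_mul_eq_one]; exact hz2
  have Hx : ∀ w : G, x * (x * w) = w := fun w => by rw [← mul_assoc, hx2, one_mul]
  have Hy : ∀ w : G, y * (y * w) = w := fun w => by rw [← mul_assoc, hy2, one_mul]
  have Hz : ∀ w : G, z * (z * w) = w := fun w => by rw [← mul_assoc, hz2, one_mul]
  have key : (x * y * z) * (z⁻¹ * (x * y * z) * z) * (x⁻¹ * (x * y * z) * x) *
      ((z * x)⁻¹ * (x * y * z) * (z * x)) = 1 := by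
    simp only [mul_inv_rev, hxi, hzi, mul_assoc, Hx, Hy, Hz, hx2, hy2, hz2, mul_one]
  refine ⟨key, ?_⟩
  apply Nat.sInf_le
  exact ⟨by norm_num, [1, z, x, z * x], rfl, by simpa [mul_assoc] using key⟩
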